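/- Suppose f = (x, y, z) : 𝔻 → ℂ³ is holomorphic with z' = −x·y', the image of f avoids the set K = ⋃_{N≥1} {(x,y,z) : max(|x|,|y|) = 2^{N−1}, |z| ≤ C_N} where C_N ≥ 2^{3N+1}, and f(0) lies in the open polydisk 2^{N₀}𝔻³. If N > N₀ is such that |x(ζ)| < 2^N and |y(ζ)| < 2^N for all ζ ∈ closed unit disk, then (x(ζ), y(ζ)) lies in the open bidisk 2^{N−1}𝔻² for all |ζ| ≤ 1 − 2^{−N}. -/

import Mathlib

open Metric

/-- The shrinking step of Lemma 2.1: a horizontal holomorphic disk avoiding the union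
of cylinders `K`, centered in `2^{N₀}𝔻³`, with `|x|,|y| < 2^N` on the closed unit disk,
satisfies `(x(ζ),y(ζ)) ∈ 2^{N−1}𝔻²` for `|ζ| ≤ 1 − 2^{−N}`. -/
theorem stmt_19 (x y z : ℂ → ℂ) (CN : ℕ → ℝ) (N₀ N : ℕ)
    (hN₀ : 1 ≤ N₀) (hN : N₀ < N)
    (hCN : ∀ M : ℕ, 1 ≤ M → (2:ℝ)^(3*M+1) ≤ CN M)
    (hx : DifferentiableOn ℂ x (closedBall 0 1))
    (hy : DifferentiableOn ℂ y (closedBall 0 1))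
    (hz : DifferentiableOn ℂ z (closedBall 0 1))
    (hhor : ∀ ζ ∈ ball (0:ℂ) 1, deriv z ζ = -(x ζ * deriv y ζ))
    (havoid : ∀ ζ ∈ closedBall (0:ℂ) 1,
      ¬ ∃ M : ℕ, 1 ≤ M ∧ max ‖x ζ‖ ‖y ζ‖ = (2:ℝ)^(M-1) ∧ ‖z ζ‖ ≤ CN M)
    (h0 : ‖x 0‖ < 2^N₀ ∧ ‖y 0‖ < 2^N₀ ∧ ‖z 0‖ < 2^N₀)
    (hxb : ∀ ζ ∈ closedBall (0:ℂ) 1, ‖x ζ‖ < 2^N)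
    (hyb : ∀ ζ ∈ closedBall (0:ℂ) 1, ‖y ζ‖ < 2^N) :
    ∀ ζ : ℂ, ‖ζ‖ ≤ 1 - (2:ℝ)^(-(N:ℤ)) →
      ‖x ζ‖ < (2:ℝ)^(N-1) ∧ ‖y ζ‖ < (2:ℝ)^(N-1) := by
  obtain ⟨hx0, hy0, hz0⟩ := h0
  have hNpos : 0 < N := by omega
  have h2N : (2:ℝ)^(-(N:ℤ)) = ((2:ℝ)^N)⁻¹ := by rw [zpow_neg, zpow_natCast]
  set r : ℝ := 1 - (2:ℝ)^(-(N:ℤ)) with hrdef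
  have h2Npos : (0:ℝ) < (2:ℝ)^N := by positivity
  have h2Nge1 : (1:ℝ) ≤ (2:ℝ)^N := one_le_pow₀ one_le_two
  have hinv_pos : (0:ℝ) < (2:ℝ)^(-(N:ℤ)) := by positivity
  have hinv_le : (2:ℝ)^(-(N:ℤ)) ≤ 1 := by
    rw [h2N]
    exact inv_le_one_of_one_le₀ h2Nge1
  have hr0 : (0:ℝ) ≤ r := by simp only [hrdef]; linarith
  have hsub : closedBall (0:ℂ) r ⊆ ball (0:ℂ) 1 := by
    intro w hw
    rw [mem_closedBall] at hw
    rw [mem_ball]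
    have : r < 1 := by simp only [hrdef]; linarith
    linarith
  have hsub2 : closedBall (0:ℂ) r ⊆ closedBall (0:ℂ) 1 :=
    hsub.trans ball_subset_closedBall
  -- Cauchy/Schwarz estimate on deriv y
  have hdy : ∀ w ∈ closedBall (0:ℂ) r, ‖deriv y w‖ ≤ (2:ℝ)^(2*N+1) := by
    intro w hw
    have hball : ball w ((2:ℝ)^(-(N:ℤ))) ⊆ closedBall (0:ℂ) 1 := by
      intro u hu
      rw [mem_ball] at hu
      rw [mem_closedBall]
      have ht := dist_triangle u w 0
      have hwr : dist w 0 ≤ r := mem_closedBall.mp hw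
      have : r = 1 - (2:ℝ)^(-(N:ℤ)) := hrdef
      linarith
    have hmaps : Set.MapsTo y (ball w ((2:ℝ)^(-(N:ℤ)))) (ball (y w) ((2:ℝ)^(N+1))) := by
      intro u hu
      have hu1 : u ∈ closedBall (0:ℂ) 1 := hball hu
      rw [mem_ball]
      calc dist (y u) (y w) ≤ ‖y u‖ + ‖y w‖ := by
            rw [dist_eq_norm]; exact norm_sub_le _ _
        _ < (2:ℝ)^N + (2:ℝ)^N := add_lt_add (hyb u hu1) (hyb w (hsub2 hw))
        _ = (2:ℝ)^(N+1) := by ring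
    have hest := Complex.norm_deriv_le_div_of_mapsTo_ball (hy.mono hball) (hmaps.mono_right ball_subset_closedBall) hinv_pos
    have hq : (2:ℝ)^(N+1) / (2:ℝ)^(-(N:ℤ)) = (2:ℝ)^(2*N+1) := by
      rw [h2N, div_inv_eq_mul, ← pow_add]
      congr 1
      omega
    linarith [hest, hq ▸ hest]
  -- bound on deriv z
  have hdz : ∀ w ∈ closedBall (0:ℂ) r, ‖deriv z w‖ ≤ (2:ℝ)^(3*N+1) := by
    intro w hw
    rw [hhor w (hsub hw), norm_neg, norm_mul]
    calc ‖x w‖ * ‖deriv y w‖ ≤ (2:ℝ)^N * (2:ℝ)^(2*N+1) :=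
          mul_le_mul (hxb w (hsub2 hw)).le (hdy w hw) (norm_nonneg _) (by positivity)
      _ = (2:ℝ)^(3*N+1) := by rw [← pow_add]; congr 1; omega
  have h0r : (0:ℂ) ∈ closedBall (0:ℂ) r := mem_closedBall_self hr0
  -- bound on z
  have hzb : ∀ w ∈ closedBall (0:ℂ) r, ‖z w‖ < CN N := by
    intro w hw
    have hder : ∀ u ∈ closedBall (0:ℂ) r,
        HasDerivWithinAt z (deriv z u) (closedBall (0:ℂ) r) u := by
      intro u hu
      have hnhds : closedBall (0:ℂ) 1 ∈ nhds u :=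
        Filter.mem_of_superset (isOpen_ball.mem_nhds (hsub hu)) ball_subset_closedBall
      exact ((hz.differentiableAt hnhds).hasDerivAt).hasDerivWithinAt
    have key := (convex_closedBall (0:ℂ) r).norm_image_sub_le_of_norm_hasDerivWithin_le
      hder hdz h0r hw
    have hwr : ‖w - 0‖ ≤ r := by
      rw [sub_zero, ← mem_closedBall_zero_iff]; exact hw
    have hmul : (2:ℝ)^(3*N+1) * ‖w - 0‖ ≤ (2:ℝ)^(3*N+1) * r :=
      mul_le_mul_of_nonneg_left hwr (by positivity)
    have e1 : (2:ℝ)^(3*N+1) * ((2:ℝ)^N)⁻¹ = (2:ℝ)^(2*N+1) := by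
      rw [show (2:ℝ)^(3*N+1) = (2:ℝ)^(2*N+1) * (2:ℝ)^N by rw [← pow_add]; congr 1; omega]
      field_simp
    have e2 : (2:ℝ)^N₀ < (2:ℝ)^(2*N+1) := by
      apply pow_lt_pow_right₀ one_lt_two
      omega
    have hrr : (2:ℝ)^(3*N+1) * r = (2:ℝ)^(3*N+1) - (2:ℝ)^(2*N+1) := by
      simp only [hrdef, h2N]
      rw [mul_sub, mul_one, e1]
    have htri : ‖z w‖ ≤ ‖z 0‖ + ‖z w - z 0‖ := by
      calc ‖z w‖ = ‖z 0 + (z w - z 0)‖ := by ring_nf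
        _ ≤ ‖z 0‖ + ‖z w - z 0‖ := norm_add_le _ _
    have hcn := hCN N hNpos
    linarith
  -- avoidance forces max ≠ 2^(N-1)
  have hne : ∀ w ∈ closedBall (0:ℂ) r, max ‖x w‖ ‖y w‖ ≠ (2:ℝ)^(N-1) := by
    intro w hw hmax
    exact havoid w (hsub2 hw) ⟨N, hNpos, hmax, (hzb w hw).le⟩
  intro ζ hζ
  have hζr : ζ ∈ closedBall (0:ℂ) r := by
    rw [mem_closedBall_zero_iff]; exact hζ
  have hcont : ContinuousOn (fun w => max ‖x w‖ ‖y w‖) (closedBall (0:ℂ) r) :=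
    ContinuousOn.sup ((hx.continuousOn.mono hsub2).norm) ((hy.continuousOn.mono hsub2).norm)
  have hg0 : max ‖x 0‖ ‖y 0‖ < (2:ℝ)^(N-1) := by
    have hle : (2:ℝ)^N₀ ≤ (2:ℝ)^(N-1) := pow_le_pow_right₀ one_le_two (by omega)
    exact lt_of_lt_of_le (max_lt hx0 hy0) hle
  have hlt : max ‖x ζ‖ ‖y ζ‖ < (2:ℝ)^(N-1) := by
    by_contra hcon
    push_neg at hcon
    have hmem : (2:ℝ)^(N-1) ∈ Set.Icc (max ‖x 0‖ ‖y 0‖) (max ‖x ζ‖ ‖y ζ‖) := ⟨hg0.le, hcon⟩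
    obtain ⟨w, hw, hweq⟩ :=
      ((convex_closedBall (0:ℂ) r).isPreconnected).intermediate_value h0r hζr hcont hmem
    exact hne w hw hweq
  exact ⟨lt_of_le_of_lt (le_max_left _ _) hlt, lt_of_le_of_lt (le_max_right _ _) hlt⟩
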